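/- Let θ ∈ (0, π/2] and r > 0, and set t = r·e^{−iθ}. (i) If there exists ψ ∈ (−3π/2, −π + θ) such that e^{2iθ}·ξ(t) = |ξ(t)|·e^{iψ}, then Re( conj(ξ(t)) · e^{−iθ}·R(t) ) < 0, i.e. ∂_r |ξ(r·e^{−iθ})| < 0. (ii) If there exists ψ ∈ (−π/2, θ) such that e^{2iθ}·ξ(t) = |ξ(t)|·e^{iψ}, then Re( conj(ξ(t)) · e^{−iθ}·R(t) ) > 0, i.e. ∂_r |ξ(r·e^{−iθ})| > 0. -/

import Mathlib

open Complex Real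
set_option maxHeartbeats 1000000

/-- The branch `R(t) = √(t-1)·√(t+1)` with principal complex square roots. -/
noncomputable def Rb (t : ℂ) : ℂ := (t - 1) ^ ((1 : ℂ)/2) * (t + 1) ^ ((1 : ℂ)/2)

/-- `ξ(t) = (1/2)(t·R(t) − Log(t + R(t)))` with the principal logarithm. -/
noncomputable def xi (t : ℂ) : ℂ := (1/2 : ℂ) * (t * Rb t - Complex.log (t + Rb t))

lemma pade {s : ℝ} (hs : 1 ≤ s) : 2 * (s - 1) ≤ (s + 1) * Real.log s := by
  have hasD : ∀ x : ℝ, 0 < x → HasDerivAt (fun y : ℝ => Real.log y + 4 * (y+1)⁻¹)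
      (x⁻¹ + 4 * (-1 / (x+1)^2)) x := by
    intro x hx
    have h1 : HasDerivAt (fun y : ℝ => y + 1) 1 x := (hasDerivAt_id x).add_const 1
    have h2 : HasDerivAt (fun y : ℝ => (y+1)⁻¹) (-1 / (x+1)^2) x := h1.inv (by positivity)
    exact (Real.hasDerivAt_log (ne_of_gt hx)).add (h2.const_mul 4)
  have hmono : MonotoneOn (fun y : ℝ => Real.log y + 4 * (y+1)⁻¹) (Set.Ici 1) := by
    apply monotoneOn_of_deriv_nonneg (convex_Ici 1)
    · intro x hx
      have hx0 : (0:ℝ) < x := lt_of_lt_of_le one_pos (by simpa using hx)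
      exact ((hasD x hx0).continuousAt).continuousWithinAt
    · intro x hx
      rw [interior_Ici] at hx
      have hx0 : (0:ℝ) < x := lt_trans one_pos hx
      exact ((hasD x hx0).differentiableAt).differentiableWithinAt
    · intro x hx
      rw [interior_Ici] at hx
      have hx0 : (0:ℝ) < x := lt_trans one_pos hx
      rw [(hasD x hx0).deriv]
      have h1 : x⁻¹ + 4 * (-1 / (x+1)^2) = ((x-1)^2) / (x*(x+1)^2) := by
        field_simp; ring
      rw [h1]; positivity
  have h := hmono (by simp) (by simpa using hs) hs
  simp only [Real.log_one] at h
  norm_num at h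
  have hs1 : (0:ℝ) < s + 1 := by linarith
  have h2 : 2 - 4 * (s+1)⁻¹ ≤ Real.log s := by linarith
  have h3 : (2 - 4 * (s+1)⁻¹) * (s+1) = 2*(s-1) := by field_simp; ring
  nlinarith [mul_le_mul_of_nonneg_right h2 hs1.le]

theorem stmt6 (θ r : ℝ) (hθ : θ ∈ Set.Ioc 0 (π/2)) (hr : 0 < r)
    (t : ℂ) (ht : t = (r : ℂ) * Complex.exp (-(θ : ℂ) * Complex.I)) :
    ((∃ ψ ∈ Set.Ioo (-(3*π)/2) (-π + θ),
        Complex.exp (2 * (θ : ℂ) * Complex.I) * xi t =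
          (‖xi t‖ : ℂ) * Complex.exp ((ψ : ℂ) * Complex.I)) →
      ((starRingEnd ℂ) (xi t) * (Complex.exp (-(θ : ℂ) * Complex.I) * Rb t)).re < 0) ∧
    ((∃ ψ ∈ Set.Ioo (-(π/2)) θ,
        Complex.exp (2 * (θ : ℂ) * Complex.I) * xi t =
          (‖xi t‖ : ℂ) * Complex.exp ((ψ : ℂ) * Complex.I)) →
      0 < ((starRingEnd ℂ) (xi t) * (Complex.exp (-(θ : ℂ) * Complex.I) * Rb t)).re) := by
  obtain ⟨hθ0, hθπ⟩ := hθ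
  have hπ := Real.pi_pos
  have ht' : t = (r : ℂ) * Complex.exp (((-θ : ℝ) : ℂ) * Complex.I) := by push_cast; exact ht
  have htre : t.re = r * Real.cos θ := by
    rw [ht', Complex.mul_re, Complex.ofReal_re, Complex.ofReal_im,
      Complex.exp_ofReal_mul_I_re, Complex.exp_ofReal_mul_I_im, Real.cos_neg, Real.sin_neg]
    ring
  have htim : t.im = -(r * Real.sin θ) := by
    rw [ht', Complex.mul_im, Complex.ofReal_re, Complex.ofReal_im,
      Complex.exp_ofReal_mul_I_re, Complex.exp_ofReal_mul_I_im, Real.cos_neg, Real.sin_neg]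
    ring
  have hsinθ : 0 < Real.sin θ := Real.sin_pos_of_pos_of_lt_pi hθ0 (by linarith)
  have hcosθ : 0 ≤ Real.cos θ := Real.cos_nonneg_of_mem_Icc ⟨by linarith, hθπ⟩
  have hx : 0 ≤ t.re := by rw [htre]; positivity
  have hy : t.im < 0 := by rw [htim]; nlinarith
  have h1im : (t - 1).im < 0 := by simpa using hy
  have h2im : (t + 1).im < 0 := by simpa using hy
  have h1ne : t - 1 ≠ 0 := by intro h; rw [h] at h1im; simp at h1im
  have h2ne : t + 1 ≠ 0 := by intro h; rw [h] at h2im; simp at h2im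
  set a := (t - 1).arg with ha_def
  set b := (t + 1).arg with hb_def
  set ρ₁ := ‖t - 1‖ with hρ₁_def
  set ρ₂ := ‖t + 1‖ with hρ₂_def
  have ha0 : a < 0 := Complex.arg_neg_iff.2 h1im
  have hb0 : b < 0 := Complex.arg_neg_iff.2 h2im
  have haπ : -π < a := Complex.neg_pi_lt_arg _
  have hbπ : -π < b := Complex.neg_pi_lt_arg _
  have hρ₁ : 0 < ρ₁ := norm_pos_iff.2 h1ne
  have hρ₂ : 0 < ρ₂ := norm_pos_iff.2 h2ne
  have hp1 : (ρ₁ : ℂ) * Complex.exp ((a : ℂ) * Complex.I) = t - 1 :=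
    Complex.norm_mul_exp_arg_mul_I _
  have hp2 : (ρ₂ : ℂ) * Complex.exp ((b : ℂ) * Complex.I) = t + 1 :=
    Complex.norm_mul_exp_arg_mul_I _
  have hE1 : ((ρ₁ * ρ₂ : ℝ) : ℂ) * Complex.exp (((a + b : ℝ) : ℂ) * Complex.I)
      = (t - 1) * (t + 1) := by
    rw [← hp1, ← hp2,
      show ((ρ₁:ℂ) * Complex.exp ((a : ℂ) * Complex.I)) *
          ((ρ₂:ℂ) * Complex.exp ((b : ℂ) * Complex.I))
        = (ρ₁:ℂ) * (ρ₂:ℂ) * (Complex.exp ((a : ℂ) * Complex.I) *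
            Complex.exp ((b : ℂ) * Complex.I)) from by ring,
      ← Complex.exp_add]
    push_cast
    ring
  have him1 : ρ₁ * ρ₂ * Real.sin (a + b) = 2 * (t.re * t.im) := by
    have h := congrArg Complex.im hE1
    simp only [Complex.mul_im, Complex.ofReal_re, Complex.ofReal_im,
      Complex.exp_ofReal_mul_I_re, Complex.exp_ofReal_mul_I_im, Complex.sub_re,
      Complex.sub_im, Complex.add_re, Complex.add_im, Complex.one_re, Complex.one_im] at h
    linarith
  have hsinab : Real.sin (a + b) ≤ 0 := by
    have h0 : t.re * t.im ≤ 0 := mul_nonpos_of_nonneg_of_nonpos hx hy.le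
    nlinarith [mul_pos hρ₁ hρ₂]
  have claim1 : -π ≤ a + b := by
    by_contra h
    push_neg at h
    have h2 : 0 < a + b + 2 * π := by linarith
    have h3 : a + b + 2 * π < π := by linarith
    have := Real.sin_pos_of_pos_of_lt_pi h2 h3
    rw [Real.sin_add_two_pi] at this
    linarith
  have hT : t * t * Complex.exp (((2 * θ : ℝ) : ℂ) * Complex.I) = ((r ^ 2 : ℝ) : ℂ) := by
    rw [ht']
    rw [show ((r:ℂ) * Complex.exp (((-θ : ℝ) : ℂ) * Complex.I)) *
        ((r:ℂ) * Complex.exp (((-θ : ℝ) : ℂ) * Complex.I)) *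
        Complex.exp (((2 * θ : ℝ) : ℂ) * Complex.I)
        = (r:ℂ)^2 * (Complex.exp (((-θ : ℝ) : ℂ) * Complex.I) *
            Complex.exp (((-θ : ℝ) : ℂ) * Complex.I) *
            Complex.exp (((2 * θ : ℝ) : ℂ) * Complex.I)) from by ring,
      ← Complex.exp_add, ← Complex.exp_add,
      show ((-θ : ℝ) : ℂ) * Complex.I + ((-θ : ℝ) : ℂ) * Complex.I
          + ((2 * θ : ℝ) : ℂ) * Complex.I = 0 from by push_cast; ring,
      Complex.exp_zero]
    push_cast; ring
  have hE2 : ((ρ₁ * ρ₂ : ℝ) : ℂ) * Complex.exp (((a + b + 2 * θ : ℝ) : ℂ) * Complex.I)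
      = ((r ^ 2 : ℝ) : ℂ) - Complex.exp (((2 * θ : ℝ) : ℂ) * Complex.I) := by
    have e1 : ((ρ₁ * ρ₂ : ℝ) : ℂ) * Complex.exp (((a + b + 2 * θ : ℝ) : ℂ) * Complex.I)
        = ((ρ₁ * ρ₂ : ℝ) : ℂ) * Complex.exp (((a + b : ℝ) : ℂ) * Complex.I) *
          Complex.exp (((2 * θ : ℝ) : ℂ) * Complex.I) := by
      rw [mul_assoc, ← Complex.exp_add]
      congr 2
      push_cast; ring
    rw [e1, hE1, show (t - 1) * (t + 1) = t * t - 1 from by ring, sub_mul, hT, one_mul]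
  have him2 : ρ₁ * ρ₂ * Real.sin (a + b + 2 * θ) = -Real.sin (2 * θ) := by
    have h := congrArg Complex.im hE2
    simp only [Complex.mul_im, Complex.ofReal_re, Complex.ofReal_im,
      Complex.exp_ofReal_mul_I_re, Complex.exp_ofReal_mul_I_im, Complex.sub_im] at h
    linarith
  have hsin2θ : 0 ≤ Real.sin (2 * θ) :=
    Real.sin_nonneg_of_nonneg_of_le_pi (by linarith) (by linarith)
  have claim2 : a + b + 2 * θ ≤ 0 := by
    by_contra h
    push_neg at h
    have h3 : a + b + 2 * θ < π := by linarith
    have := Real.sin_pos_of_pos_of_lt_pi h h3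
    nlinarith [mul_pos hρ₁ hρ₂]
  set u := (Real.log ρ₁ + Real.log ρ₂) / 2 with hu_def
  set v := (a + b) / 2 with hv_def
  have hv1 : -(π / 2) ≤ v := by rw [hv_def]; linarith
  have hv2 : v ≤ -θ := by rw [hv_def]; linarith
  have hv0 : v < 0 := by linarith
  have hRexp : Rb t = Complex.exp ((u : ℂ) + (v : ℂ) * Complex.I) := by
    unfold Rb
    rw [show ((1:ℂ)/2) = ((1/2 : ℝ) : ℂ) from by norm_num,
      Complex.cpow_def_of_ne_zero h1ne, Complex.cpow_def_of_ne_zero h2ne, ← Complex.exp_add]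
    congr 1
    apply Complex.ext
    · simp only [Complex.add_re, Complex.mul_re, Complex.ofReal_re, Complex.ofReal_im,
        Complex.log_re, Complex.log_im, Complex.I_re, Complex.I_im, Complex.mul_im,
        Complex.add_im]
      rw [hu_def]; ring
    · simp only [Complex.add_re, Complex.mul_re, Complex.ofReal_re, Complex.ofReal_im,
        Complex.log_re, Complex.log_im, Complex.I_re, Complex.I_im, Complex.mul_im,
        Complex.add_im]
      rw [hv_def]; ring
  have hzre : ((u:ℂ) + (v:ℂ) * Complex.I).re = u := by simp
  have hzim : ((u:ℂ) + (v:ℂ) * Complex.I).im = v := by simp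
  have hRre : (Rb t).re = Real.exp u * Real.cos v := by
    rw [hRexp, Complex.exp_re, hzre, hzim]
  have hRim : (Rb t).im = Real.exp u * Real.sin v := by
    rw [hRexp, Complex.exp_im, hzre, hzim]
  have hRne : Rb t ≠ 0 := by rw [hRexp]; exact Complex.exp_ne_zero _
  have hRre0 : 0 ≤ (Rb t).re := by
    rw [hRre]
    have : 0 ≤ Real.cos v := Real.cos_nonneg_of_mem_Icc ⟨hv1, by linarith⟩
    positivity
  have hRim0 : (Rb t).im < 0 := by
    rw [hRim]
    have : Real.sin v < 0 := Real.sin_neg_of_neg_of_neg_pi_lt hv0 (by linarith)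
    nlinarith [Real.exp_pos u]
  -- ============ xi t ≠ 0 ==============
  set w := t + Rb t with hw_def
  have hwim : w.im < 0 := by
    rw [hw_def]
    simp only [Complex.add_im]
    linarith
  have hwre : 0 ≤ w.re := by
    rw [hw_def]
    simp only [Complex.add_re]
    linarith
  have hwne : w ≠ 0 := by intro h; rw [h] at hwim; simp at hwim
  have hR2 : Rb t * Rb t = (t - 1) * (t + 1) := by
    unfold Rb
    rw [mul_mul_mul_comm]
    congr 1
    · rw [← Complex.cpow_add _ _ h1ne]; norm_num
    · rw [← Complex.cpow_add _ _ h2ne]; norm_num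
  have hmul1 : w * (t - Rb t) = 1 := by rw [hw_def]; linear_combination -hR2
  have htmr : ‖t - Rb t‖ ≤ ‖w‖ := by
    rw [Complex.norm_def, Complex.norm_def]
    apply Real.sqrt_le_sqrt
    rw [hw_def]
    simp only [Complex.normSq_apply, Complex.sub_re, Complex.sub_im, Complex.add_re,
      Complex.add_im]
    nlinarith [mul_nonneg hx hRre0, mul_pos_of_neg_of_neg hy hRim0]
  have habsw : 1 ≤ ‖w‖ := by
    have h := congrArg (‖·‖) hmul1
    rw [norm_mul, norm_one] at h
    nlinarith [norm_nonneg w, norm_nonneg (t - Rb t), htmr]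
  have hlogw : 0 ≤ Real.log ‖w‖ := Real.log_nonneg habsw
  set n := Complex.normSq w with hn_def
  have hn : n = ‖w‖ ^ 2 := (Complex.sq_norm w).symm
  have hn1 : 1 ≤ n := by rw [hn]; nlinarith [habsw]
  have hn0 : (0 : ℝ) < n := by linarith
  have hinv : w⁻¹ = t - Rb t := inv_eq_of_mul_eq_one_right hmul1
  have h2R : (2 : ℂ) * Rb t = w - w⁻¹ := by rw [hinv, hw_def]; ring
  have hRre' : 2 * (Rb t).re = w.re - w.re / n := by
    have h := congrArg Complex.re h2R
    simp only [Complex.mul_re, Complex.sub_re, Complex.inv_re, Complex.re_ofNat,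
      Complex.im_ofNat, zero_mul, sub_zero] at h
    exact h
  have hRim' : 2 * (Rb t).im = w.im + w.im / n := by
    have h := congrArg Complex.im h2R
    simp only [Complex.mul_im, Complex.sub_im, Complex.inv_im, Complex.re_ofNat,
      Complex.im_ofNat, zero_mul, add_zero] at h
    rw [neg_div] at h
    linarith
  set φ := w.arg with hφ_def
  set L := Real.log ‖w‖ with hL_def
  have hφ0 : φ < 0 := Complex.arg_neg_iff.2 hwim
  have hφc : w.im ≤ φ * w.re := by
    rcases eq_or_lt_of_le hwre with hc | hc
    · rw [← hc, mul_zero]; exact hwim.le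
    · have hφ2 : -(π / 2) < φ := by
        have h := abs_lt.1 (Complex.abs_arg_lt_pi_div_two_iff.2 (Or.inl hc))
        linarith [h.1]
      have hcos : 0 < Real.cos φ := Real.cos_pos_of_mem_Ioo ⟨hφ2, by linarith⟩
      have htan : -φ < Real.tan (-φ) := Real.lt_tan (by linarith) (by linarith)
      rw [Real.tan_neg] at htan
      have htan2 : Real.tan φ < φ := by linarith
      rw [Real.tan_eq_sin_div_cos] at htan2
      have hsincos : Real.sin φ < φ * Real.cos φ := by
        rw [div_lt_iff₀ hcos] at htan2; linarith
      have hsin : Real.sin φ = w.im / ‖w‖ := Complex.sin_arg w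
      have hcos' : Real.cos φ = w.re / ‖w‖ := Complex.cos_arg hwne
      have haw : (0:ℝ) < ‖w‖ := norm_pos_iff.2 hwne
      rw [hsin, hcos'] at hsincos
      rw [div_lt_iff₀ haw] at hsincos
      calc w.im ≤ φ * (w.re / ‖w‖) * ‖w‖ := hsincos.le
        _ = φ * w.re := by field_simp
  have hpade : n - 1 ≤ (n + 1) * L := by
    have h := pade hn1
    have hlogn : Real.log n = 2 * L := by
      rw [hn, hL_def, Real.log_pow]
      push_cast
      ring
    rw [hlogn] at h
    linarith only [h]
  have hkey : 0 ≤ -L * (Rb t).im + φ * (Rb t).re := by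
    have hint1 : 0 ≤ (φ * w.re - w.im) * (n - 1) :=
      mul_nonneg (sub_nonneg.2 hφc) (sub_nonneg.2 hn1)
    have hint2 : 0 ≤ (-w.im) * ((n + 1) * L - (n - 1)) :=
      mul_nonneg (neg_nonneg.2 hwim.le) (sub_nonneg.2 hpade)
    have e1 : (φ * w.re - w.im) * (n - 1) + (-w.im) * ((n + 1) * L - (n - 1))
        = -L * (w.im * (n + 1)) + (φ * w.re) * (n - 1) := by ring
    have hmain : 0 ≤ -L * (w.im * (n + 1)) + (φ * w.re) * (n - 1) := by
      linarith only [hint1, hint2, e1]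
    have heq2 : n * (-L * (2 * (Rb t).im) + φ * (2 * (Rb t).re))
        = -L * (w.im * (n + 1)) + (φ * w.re) * (n - 1) := by
      rw [hRim', hRre']
      field_simp
    by_contra hneg
    push_neg at hneg
    have h5 : -L * (2 * (Rb t).im) + φ * (2 * (Rb t).re) < 0 := by linarith only [hneg]
    have h6 : n * (-L * (2 * (Rb t).im) + φ * (2 * (Rb t).re)) < 0 :=
      mul_neg_of_pos_of_neg hn0 h5
    rw [heq2] at h6
    linarith only [h6, hmain]
  have hnsqR : 0 < Complex.normSq (Rb t) := Complex.normSq_pos.2 hRne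
  have hxiim : (xi t * (starRingEnd ℂ) (Rb t)).im < 0 := by
    have e : xi t * (starRingEnd ℂ) (Rb t)
        = (((1/2 : ℝ)) : ℂ) * (t * ((Complex.normSq (Rb t) : ℝ) : ℂ)
            - Complex.log w * (starRingEnd ℂ) (Rb t)) := by
      unfold xi
      rw [← hw_def, ← Complex.mul_conj]
      push_cast
      ring
    rw [e]
    have himv : ((((1/2 : ℝ)) : ℂ) * (t * ((Complex.normSq (Rb t) : ℝ) : ℂ)
        - Complex.log w * (starRingEnd ℂ) (Rb t))).im
        = 1/2 * (t.im * Complex.normSq (Rb t) - (-L * (Rb t).im + φ * (Rb t).re)) := by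
      simp only [Complex.mul_im, Complex.mul_re, Complex.sub_im, Complex.sub_re,
        Complex.ofReal_re, Complex.ofReal_im, Complex.log_re, Complex.log_im,
        Complex.conj_re, Complex.conj_im]
      ring
    rw [himv]
    have h1 : t.im * Complex.normSq (Rb t) < 0 := mul_neg_of_neg_of_pos hy hnsqR
    linarith only [h1, hkey]
  have hxine : xi t ≠ 0 := by
    intro h
    rw [h, zero_mul] at hxiim
    simp at hxiim
  have hm : 0 < ‖xi t‖ := norm_pos_iff.2 hxine
  -- ============ main computation ==============
  have main : ∀ ψ : ℝ, Complex.exp (2 * (θ : ℂ) * Complex.I) * xi t =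
        (‖xi t‖ : ℂ) * Complex.exp ((ψ : ℂ) * Complex.I) →
      ((starRingEnd ℂ) (xi t) * (Complex.exp (-(θ : ℂ) * Complex.I) * Rb t)).re
        = ‖xi t‖ * Real.exp u * Real.cos (θ - ψ + v) := by
    intro ψ hψ
    set m := ‖xi t‖ with hm_def
    have he : Complex.exp (2 * (θ:ℂ) * Complex.I) ≠ 0 := Complex.exp_ne_zero _
    have hxi : xi t = (m : ℂ) * Complex.exp (((ψ - 2*θ : ℝ) : ℂ) * Complex.I) := by
      apply mul_left_cancel₀ he
      rw [hψ]
      have e1 : Complex.exp (2 * (θ:ℂ) * Complex.I)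
          * Complex.exp (((ψ - 2*θ : ℝ) : ℂ) * Complex.I)
          = Complex.exp ((ψ:ℂ) * Complex.I) := by
        rw [← Complex.exp_add]
        congr 1
        push_cast
        ring
      calc (m:ℂ) * Complex.exp ((ψ:ℂ) * Complex.I)
          = (m:ℂ) * (Complex.exp (2 * (θ:ℂ) * Complex.I)
            * Complex.exp (((ψ - 2*θ : ℝ) : ℂ) * Complex.I)) := by rw [e1]
        _ = Complex.exp (2 * (θ:ℂ) * Complex.I)
            * ((m:ℂ) * Complex.exp (((ψ - 2*θ : ℝ) : ℂ) * Complex.I)) := by ring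
    have hconj2 : (starRingEnd ℂ) (xi t)
        = (m:ℂ) * Complex.exp (-((((ψ - 2*θ : ℝ)) : ℂ) * Complex.I)) := by
      rw [hxi, map_mul, Complex.conj_ofReal, ← Complex.exp_conj]
      congr 1
      rw [map_mul, Complex.conj_ofReal, Complex.conj_I]
      ring
    have hfin : (starRingEnd ℂ) (xi t) * (Complex.exp (-(θ : ℂ) * Complex.I) * Rb t)
        = ((m * Real.exp u : ℝ) : ℂ) * Complex.exp (((θ - ψ + v : ℝ) : ℂ) * Complex.I) := by
      rw [hconj2, hRexp]
      have eadd : Complex.exp ((-((((ψ - 2*θ : ℝ)) : ℂ) * Complex.I)) + (-(θ:ℂ) * Complex.I)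
            + ((u : ℂ) + (v : ℂ) * Complex.I))
          = Complex.exp (-((((ψ - 2*θ : ℝ)) : ℂ) * Complex.I))
            * Complex.exp (-(θ:ℂ) * Complex.I)
            * Complex.exp ((u : ℂ) + (v : ℂ) * Complex.I) := by
        rw [Complex.exp_add, Complex.exp_add]
      have eargs : (-((((ψ - 2*θ : ℝ)) : ℂ) * Complex.I)) + (-(θ:ℂ) * Complex.I)
          + ((u : ℂ) + (v : ℂ) * Complex.I)
          = (u : ℂ) + (((θ - ψ + v : ℝ)) : ℂ) * Complex.I := by push_cast; ring
      have e2 : Complex.exp ((u:ℂ) + (((θ - ψ + v : ℝ)) : ℂ) * Complex.I)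
          = ((Real.exp u : ℝ):ℂ) * Complex.exp ((((θ - ψ + v : ℝ)) : ℂ) * Complex.I) := by
        rw [Complex.exp_add, Complex.ofReal_exp]
      calc (m:ℂ) * Complex.exp (-((((ψ - 2*θ : ℝ)) : ℂ) * Complex.I))
            * (Complex.exp (-(θ:ℂ) * Complex.I) * Complex.exp ((u : ℂ) + (v : ℂ) * Complex.I))
          = (m:ℂ) * (Complex.exp (-((((ψ - 2*θ : ℝ)) : ℂ) * Complex.I))
              * Complex.exp (-(θ:ℂ) * Complex.I)
              * Complex.exp ((u : ℂ) + (v : ℂ) * Complex.I)) := by ring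
        _ = (m:ℂ) * Complex.exp ((u:ℂ) + (((θ - ψ + v : ℝ)) : ℂ) * Complex.I) := by
              rw [← eadd, eargs]
        _ = (m:ℂ) * (((Real.exp u : ℝ):ℂ)
              * Complex.exp ((((θ - ψ + v : ℝ)) : ℂ) * Complex.I)) := by rw [e2]
        _ = ((m * Real.exp u : ℝ) : ℂ)
              * Complex.exp ((((θ - ψ + v : ℝ)) : ℂ) * Complex.I) := by push_cast; ring
    rw [hfin]
    simp only [Complex.mul_re, Complex.ofReal_re, Complex.ofReal_im,
      Complex.exp_ofReal_mul_I_re, Complex.exp_ofReal_mul_I_im, zero_mul, sub_zero]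
  have hexpu : 0 < Real.exp u := Real.exp_pos u
  constructor
  · rintro ⟨ψ, ⟨hψ1, hψ2⟩, heq⟩
    rw [main ψ heq]
    have h1 : π / 2 < θ - ψ + v := by linarith only [hψ2, hv1]
    have h2 : θ - ψ + v < π + π / 2 := by linarith only [hψ1, hv2]
    have hcn := Real.cos_neg_of_pi_div_two_lt_of_lt h1 h2
    have hmm : 0 < ‖xi t‖ * Real.exp u := by positivity
    exact mul_neg_of_pos_of_neg hmm hcn
  · rintro ⟨ψ, ⟨hψ1, hψ2⟩, heq⟩
    rw [main ψ heq]
    have h1 : -(π / 2) < θ - ψ + v := by linarith only [hψ2, hv1]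
    have h2 : θ - ψ + v < π / 2 := by linarith only [hψ1, hv2, hθ0]
    have hcp := Real.cos_pos_of_mem_Ioo ⟨h1, h2⟩
    have hmm : 0 < ‖xi t‖ * Real.exp u := by positivity
    exact mul_pos hmm hcp
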